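/- Let A be an n×n real matrix whose off-diagonal entries are all nonnegative. If x is a vector with all entries strictly positive and Ax = λx for some real scalar λ, then λ = max { Re(μ) : μ is an eigenvalue of A }. -/

import Mathlib

open Matrix

lemma aux_mem_spectrum_iff {n : ℕ} (M : Matrix (Fin n) (Fin n) ℂ) (μ : ℂ) :
    μ ∈ spectrum ℂ M ↔ ∃ v, v ≠ 0 ∧ M.mulVec v = μ • v := by
  rw [← AlgEquiv.spectrum_eq (Matrix.toLinAlgEquiv' (n := Fin n) (R := ℂ)),
    ← Module.End.hasEigenvalue_iff_mem_spectrum]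
  constructor
  · intro h
    obtain ⟨v, hv⟩ := h.exists_hasEigenvector
    refine ⟨v, hv.2, ?_⟩
    have := hv.apply_eq_smul
    simpa [Matrix.toLinAlgEquiv'_apply, Matrix.toLin'_apply] using this
  · rintro ⟨v, hv0, hv⟩
    apply Module.End.hasEigenvalue_of_hasEigenvector (x := v)
    refine ⟨Module.End.mem_eigenspace_iff.mpr ?_, hv0⟩
    simpa [Matrix.toLinAlgEquiv'_apply, Matrix.toLin'_apply] using hv

/-- A positive eigenvector of a Metzler matrix (nonnegative off-diagonal entries) has
eigenvalue equal to the maximum of the real parts of the eigenvalues. -/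
theorem positive_eigenvector_max_real_part {n : ℕ} (hn : 0 < n)
    (A : Matrix (Fin n) (Fin n) ℝ) (hA : ∀ i j, i ≠ j → 0 ≤ A i j)
    (x : Fin n → ℝ) (hx : ∀ i, 0 < x i) (lam : ℝ) (hEig : A.mulVec x = lam • x) :
    IsGreatest {r : ℝ | ∃ μ ∈ spectrum ℂ (A.map (Complex.ofReal ·)), r = μ.re} lam := by
  have hxsum : ∀ i, ∑ j, A i j * x j = lam * x i := by
    intro i
    have := congrFun hEig i
    simpa [Matrix.mulVec, dotProduct] using this
  constructor
  · -- lam is achieved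
    refine ⟨(lam : ℂ), ?_, by simp⟩
    rw [aux_mem_spectrum_iff]
    refine ⟨fun j => (x j : ℂ), ?_, ?_⟩
    · intro h
      have := congrFun h ⟨0, hn⟩
      simp only [Pi.zero_apply, Complex.ofReal_eq_zero] at this
      exact (hx ⟨0, hn⟩).ne' this
    · funext i
      have := hxsum i
      simp only [Matrix.mulVec, dotProduct, Matrix.map_apply, Pi.smul_apply, smul_eq_mul]
      push_cast
      exact_mod_cast congrArg (Complex.ofReal) this
  · -- upper bound
    rintro r ⟨μ, hμ, rfl⟩
    rw [aux_mem_spectrum_iff] at hμ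
    obtain ⟨v, hv0, hv⟩ := hμ
    -- choose i maximizing |v i| / x i
    have : Nonempty (Fin n) := ⟨⟨0, hn⟩⟩
    obtain ⟨i, -, hi⟩ := Finset.exists_max_image Finset.univ
      (fun j => ‖v j‖ / x j) ⟨⟨0, hn⟩, Finset.mem_univ _⟩
    set c : ℝ := ‖v i‖ / x i with hc
    have hvle : ∀ j, ‖v j‖ ≤ c * x j := by
      intro j
      have := hi j (Finset.mem_univ j)
      rw [div_le_div_iff₀ (hx j) (hx i)] at this
      rw [hc, div_mul_eq_mul_div, le_div_iff₀ (hx i)]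
      linarith
    have hcpos : 0 < c := by
      obtain ⟨j, hj⟩ := Function.ne_iff.mp hv0
      have h1 : 0 < ‖v j‖ := by
        simpa [norm_pos_iff] using hj
      have := hvle j
      nlinarith [hx j, (hx j).le]
    have hvi : ‖v i‖ = c * x i := by
      rw [hc, div_mul_cancel₀ _ (hx i).ne']
    have hvipos : 0 < ‖v i‖ := by
      rw [hvi]; exact mul_pos hcpos (hx i)
    -- eigen equation at i
    have heq : (μ - (A i i : ℂ)) * v i = ∑ j ∈ Finset.univ.erase i, (A i j : ℂ) * v j := by
      have h := congrFun hv i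
      simp only [Matrix.mulVec, dotProduct, Matrix.map_apply, Pi.smul_apply, smul_eq_mul] at h
      rw [← Finset.add_sum_erase _ _ (Finset.mem_univ i)] at h
      linear_combination -h
    have habs : ‖μ - (A i i : ℂ)‖ * (c * x i)
        ≤ (lam - A i i) * (c * x i) := by
      have h1 : ‖μ - (A i i : ℂ)‖ * ‖v i‖
          ≤ ∑ j ∈ Finset.univ.erase i, A i j * (c * x j) := by
        rw [← norm_mul, heq]
        refine (norm_sum_le _ _).trans (Finset.sum_le_sum ?_)
        intro j hj
        have hAij : 0 ≤ A i j := hA i j (Finset.ne_of_mem_erase hj).symm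
        rw [norm_mul, Complex.norm_real, Real.norm_of_nonneg hAij]
        exact mul_le_mul_of_nonneg_left (hvle j) hAij
      have h2 : ∑ j ∈ Finset.univ.erase i, A i j * (c * x j)
          = c * (lam * x i - A i i * x i) := by
        have hs := hxsum i
        rw [← Finset.add_sum_erase _ (fun j => A i j * x j) (Finset.mem_univ i)] at hs
        have hsum2 : ∑ j ∈ Finset.univ.erase i, A i j * x j
            = lam * x i - A i i * x i := by linarith
        calc ∑ j ∈ Finset.univ.erase i, A i j * (c * x j)
            = c * ∑ j ∈ Finset.univ.erase i, A i j * x j := by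
              rw [Finset.mul_sum]; exact Finset.sum_congr rfl fun j _ => by ring
          _ = c * (lam * x i - A i i * x i) := by rw [hsum2]
      calc ‖μ - (A i i : ℂ)‖ * (c * x i)
          = ‖μ - (A i i : ℂ)‖ * ‖v i‖ := by rw [hvi]
        _ ≤ c * (lam * x i - A i i * x i) := h2 ▸ h1
        _ = (lam - A i i) * (c * x i) := by ring
    have hfin : ‖μ - (A i i : ℂ)‖ ≤ lam - A i i :=
      le_of_mul_le_mul_right habs (mul_pos hcpos (hx i))
    have hre : μ.re - A i i ≤ ‖μ - (A i i : ℂ)‖ := by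
      have := Complex.re_le_norm (μ - (A i i : ℂ))
      simpa using this
    linarith
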